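/- Let k be a field, A a finite-dimensional k-algebra, and fix sets S_0 ⊆ S_1 of isomorphism classes of simple right A-modules. Let S_y be a simple module with class in S_1∖S_0 and S_x a simple module with class not in S_1. Let U_y be the largest submodule of the injective hull of S_y such that soc(U_y) ≅ S_y and every composition factor of U_y/soc(U_y) lies in S_0, and let U_x be the largest quotient of the projective cover of S_x such that top(U_x) ≅ S_x, every other composition factor of U_x lies in S_1, and every composition factor of soc(U_x) lies in S_1∖S_0. Then Ext^1_A(U_x, U_y) = 0. -/

import Mathlib

open CategoryTheory Limits DerivedCategory Pretriangulated

noncomputable section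
namespace PervSL2


/-- The category of right `A`-modules (as modules over `Aᵐᵒᵖ`). -/
abbrev Mod (A : Type) [Ring A] := ModuleCat.{0} Aᵐᵒᵖ

noncomputable instance (R : Type) [Ring R] : HasDerivedCategory.{1} (ModuleCat.{0} R) :=
  HasDerivedCategory.standard _

/-- A finite-dimensional algebra `A` over `k` is symmetric if it admits a `k`-linear form
`l` with `l (a * b) = l (b * a)` whose kernel contains no nonzero one-sided ideal. -/
def IsSymmetricAlg (k A : Type) [Field k] [Ring A] [Algebra k A] : Prop :=
  ∃ l : A →ₗ[k] k, (∀ a b : A, l (a * b) = l (b * a)) ∧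
    (∀ I : Submodule A A, (∀ x ∈ I, l x = 0) → I = ⊥) ∧
    (∀ I : Submodule Aᵐᵒᵖ A, (∀ x ∈ I, l x = 0) → I = ⊥)

/-- The socle of a module: the sum of all simple (= atomic) submodules. -/
def socle (R : Type) [Ring R] (M : Type) [AddCommGroup M] [Module R M] : Submodule R M :=
  sSup {N : Submodule R M | IsAtom N}

/-- The radical of a module: the intersection of all maximal submodules. -/
def radical (R : Type) [Ring R] (M : Type) [AddCommGroup M] [Module R M] : Submodule R M :=
  sInf {N : Submodule R M | IsCoatom N}

/-- The top (head) of a module: the quotient by its radical. -/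
abbrev headOf (R : Type) [Ring R] (M : Type) [AddCommGroup M] [Module R M] : Type :=
  M ⧸ radical R M

/-- Every simple subquotient of `M` is isomorphic to (the underlying module of) a member
of the family `𝒯`.  This formalizes "all composition factors of `M` lie in `𝒯`". -/
def AllCompFactorsIn (R : Type) [Ring R] (M : Type) [AddCommGroup M] [Module R M]
    (𝒯 : Set (ModuleCat.{0} R)) : Prop :=
  ∀ (N : Submodule R M) (P : Submodule R N), IsSimpleModule R (↥N ⧸ P) →
    ∃ T ∈ 𝒯, Nonempty ((↥N ⧸ P) ≃ₗ[R] ↥T)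

/-- `P` (projective) together with an essential epimorphism onto `M` is a projective
cover of `M`. -/
def IsProjectiveCover (R : Type) [Ring R] (P : Type) [AddCommGroup P] [Module R P]
    (M : Type) [AddCommGroup M] [Module R M] (f : P →ₗ[R] M) : Prop :=
  Module.Projective R P ∧ Function.Surjective f ∧
    ∀ N : Submodule R P, Submodule.map f N = ⊤ → N = ⊤

/-- `I` (injective) together with an essential monomorphism from `M` is an injective
hull of `M`. -/
def IsInjectiveHull (R : Type) [Ring R] (I : Type) [AddCommGroup I] [Module R I]
    (M : Type) [AddCommGroup M] [Module R M] (f : M →ₗ[R] I) : Prop :=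
  Module.Injective R I ∧ Function.Injective f ∧
    ∀ N : Submodule R I, N ⊓ LinearMap.range f = ⊥ → N = ⊥

/-- Scalar multiplication by `c : k` on a right `A`-module, for a `k`-algebra `A`;
this is `A`-linear since the image of `k` is central. -/
def centralSmul (k : Type) [CommRing k] {A : Type} [Ring A] [Algebra k A]
    (c : k) (M : Type) [AddCommGroup M] [Module Aᵐᵒᵖ M] : M →ₗ[Aᵐᵒᵖ] M where
  toFun m := algebraMap k Aᵐᵒᵖ c • m
  map_add' := smul_add _
  map_smul' a m := by
    simp only [RingHom.id_apply]
    rw [← mul_smul, ← mul_smul, Algebra.commutes]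

lemma simpleModuleFinite {R M : Type} [Ring R] [AddCommGroup M] [Module R M]
    (h : IsSimpleModule R M) : Module.Finite R M := by
  haveI := h
  haveI : Nontrivial M := IsSimpleModule.nontrivial R M
  obtain ⟨x, hx⟩ := exists_ne (0 : M)
  have hsp : Submodule.span R ({x} : Set M) = ⊤ := by
    rcases eq_bot_or_eq_top (Submodule.span R ({x} : Set M)) with h' | h'
    · exact absurd (Submodule.span_singleton_eq_bot.mp h') hx
    · exact h'
  exact ⟨⟨{x}, by simpa using hsp⟩⟩

lemma finite_of_isZero {A : Type} [Ring A] (M : Mod A) (h : IsZero M) :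
    Module.Finite Aᵐᵒᵖ M := by
  haveI : Subsingleton M := ModuleCat.subsingleton_of_isZero h
  infer_instance

lemma noetherianRing_op (k A : Type) [Field k] [Ring A] [Algebra k A]
    [FiniteDimensional k A] : IsNoetherianRing Aᵐᵒᵖ := by
  haveI : IsNoetherian k Aᵐᵒᵖ := isNoetherian_of_linearEquiv (MulOpposite.opLinearEquiv k)
  exact isNoetherian_of_tower k inferInstance

lemma finite_submodule (k : Type) [Field k] {A : Type} [Ring A] [Algebra k A]
    [FiniteDimensional k A] {M : Type} [AddCommGroup M] [Module Aᵐᵒᵖ M]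
    (hM : Module.Finite Aᵐᵒᵖ M) (U : Submodule Aᵐᵒᵖ M) : Module.Finite Aᵐᵒᵖ U := by
  haveI := hM
  haveI := noetherianRing_op k A
  haveI : IsNoetherian Aᵐᵒᵖ M := isNoetherian_of_isNoetherianRing_of_finite Aᵐᵒᵖ M
  exact Module.Finite.iff_fg.mpr (IsNoetherian.noetherian U)

lemma finite_quotient {A : Type} [Ring A] {M : Type} [AddCommGroup M] [Module Aᵐᵒᵖ M]
    (hM : Module.Finite Aᵐᵒᵖ M) (N : Submodule Aᵐᵒᵖ M) : Module.Finite Aᵐᵒᵖ (M ⧸ N) := by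
  haveI := hM
  exact Module.Finite.of_surjective N.mkQ (Submodule.mkQ_surjective N)

/-- A complete set of pairwise non-isomorphic representatives of the simple
right modules. -/
structure SimplesFamily (R : Type) [Ring R] (Z : Type) where
  S : Z → ModuleCat.{0} R
  simple : ∀ z, IsSimpleModule R (S z)
  nonIso : ∀ y z : Z, Nonempty ((S y : Type) ≃ₗ[R] (S z : Type)) → y = z
  complete : ∀ (M : Type) (_ : AddCommGroup M) (_ : Module R M),
    IsSimpleModule R M → ∃ z, Nonempty (M ≃ₗ[R] (S z : Type))

lemma SimplesFamily.fin {R : Type} [Ring R] {Z : Type} (SF : SimplesFamily R Z) (z : Z) :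
    Module.Finite R (SF.S z) :=
  simpleModuleFinite (SF.simple z)





variable (A : Type) [Ring A]

/-- The defining property of the bounded derived category of finitely generated right
`A`-modules inside the derived category of all right `A`-modules: bounded homology, all
homology finitely generated. -/
def DbProp (X : DerivedCategory (Mod A)) : Prop :=
  (∃ b : ℕ, ∀ n : ℤ, (b : ℤ) < |n| → IsZero ((homologyFunctor (Mod A) n).obj X)) ∧
  (∀ n : ℤ, Module.Finite Aᵐᵒᵖ ((homologyFunctor (Mod A) n).obj X))

/-- The bounded derived category of finitely generated right `A`-modules. -/
def Db := ObjectProperty.FullSubcategory (DbProp A)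

instance : Category (Db A) := ObjectProperty.FullSubcategory.category _

/-- The homology shift isomorphism in the derived category. -/
def homologyShiftIso (X : DerivedCategory (Mod A)) (n a : ℤ) :
    (homologyFunctor (Mod A) a).obj (X⟦n⟧) ≅ (homologyFunctor (Mod A) (n + a)).obj X :=
  ((homologyFunctor (Mod A) 0).shiftIso n a (n + a) rfl).app X

/-- The shift on the bounded derived category. -/
def DbShift (X : Db A) (n : ℤ) : Db A where
  obj := X.obj⟦n⟧
  property := by
    obtain ⟨⟨b, hb⟩, hfin⟩ := X.property
    constructor
    · refine ⟨b + n.natAbs, fun m hm => ?_⟩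
      refine IsZero.of_iso ?_ (homologyShiftIso A X.obj n m)
      refine hb (n + m) ?_
      have h1 : |m| ≤ |n + m| + |n| := by
        calc |m| = |n + m + -n| := by ring_nf
        _ ≤ |n + m| + |(-n)| := abs_add_le _ _
        _ = |n + m| + |n| := by rw [abs_neg]
      have h2 : (n.natAbs : ℤ) = |n| := Int.abs_eq_natAbs n ▸ rfl
      push_cast at hm
      omega
    · intro m
      haveI := hfin (n + m)
      exact Module.Finite.equiv (homologyShiftIso A X.obj n m).toLinearEquiv.symm

/-- The comparison between the single (stalk) functor to the derived category and the
homology of single complexes. -/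
def singleHomologyIso (M : Mod A) (d m : ℤ) :
    (homologyFunctor (Mod A) m).obj ((singleFunctor (Mod A) d).obj M) ≅
      ((CochainComplex.singleFunctor (Mod A) d).obj M).homology m :=
  (homologyFunctor (Mod A) m).mapIso
      (((SingleFunctors.evaluation _ _ d).mapIso (singleFunctorsPostcompQIso (Mod A))).app M) ≪≫
    (homologyFunctorFactors (Mod A) m).app _

/-- The stalk complex of a finitely generated module `M`, concentrated in degree `d`, as an
object of the bounded derived category `Db A`. -/
def DbSingle (M : Mod A) (hM : Module.Finite Aᵐᵒᵖ M) (d : ℤ) : Db A where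
  obj := (singleFunctor (Mod A) d).obj M
  property := by
    constructor
    · refine ⟨d.natAbs, fun m hm => ?_⟩
      refine IsZero.of_iso ?_ (singleHomologyIso A M d m)
      refine HomologicalComplex.isZero_single_obj_homology _ _ _ _ ?_
      intro h
      subst h
      have h2 : (m.natAbs : ℤ) = |m| := Int.abs_eq_natAbs m ▸ rfl
      omega
    · intro m
      by_cases h : m = d
      · subst h
        haveI := hM
        exact Module.Finite.equiv
          ((singleHomologyIso A M m m).trans
            (HomologicalComplex.singleObjHomologySelfIso _ _ _)).toLinearEquiv.symm
      · refine finite_of_isZero _ (IsZero.of_iso ?_ (singleHomologyIso A M d m))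
        exact HomologicalComplex.isZero_single_obj_homology _ _ _ _ h

variable {A} in
/-- An equivalence on bounded derived categories commuting with shifts (this is the part of
being a triangulated functor we keep track of). -/
def PreservesShift {B : Type} [Ring B] (F : Db A ⥤ Db B) : Prop :=
  ∀ (X : Db A) (n : ℤ), Nonempty (F.obj (DbShift A X n) ≅ DbShift B (F.obj X) n)

/-- The union of the pieces of a filtration strictly below level `i`. -/
def below {Z : Type} (𝒮 : ℕ → Set Z) (i : ℕ) : Set Z := ⋃ j < i, 𝒮 j



-- fg module category and Morita equivalence
def fgMod (R : Type) [Ring R] :=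
  ObjectProperty.FullSubcategory (fun M : ModuleCat.{0} R => Module.Finite R M)

instance (R : Type) [Ring R] : Category (fgMod R) := ObjectProperty.FullSubcategory.category _
instance (R : Type) [Ring R] : Preadditive (fgMod R) := Preadditive.fullSubcategory _

/-- Morita equivalence of `R` and `S`: an additive equivalence between the categories of
finitely generated right modules. -/
def MoritaEquiv (R S : Type) [Ring R] [Ring S] : Prop :=
  ∃ F : fgMod Rᵐᵒᵖ ≌ fgMod Sᵐᵒᵖ, F.functor.Additive

-- homotopy category of cochain complexes of right A-modules
variable (A : Type) [Ring A]

abbrev Kq : CochainComplex (Mod A) ℤ ⥤ HomotopyCategory (Mod A) (ComplexShape.up ℤ) :=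
  HomotopyCategory.quotient (Mod A) (ComplexShape.up ℤ)

/-- `T` is a tilting complex over `A`: a bounded complex of finitely generated projective
right `A`-modules with no nonzero self-`Hom`s in the homotopy category in nonzero shifts,
which generates the bounded homotopy category of finitely generated projectives as a
thick (triangulated, closed under retracts) subcategory. -/
def IsTiltingComplex (T : CochainComplex (Mod A) ℤ) : Prop :=
  (∃ b : ℕ, ∀ n : ℤ, (b : ℤ) < |n| → IsZero (T.X n)) ∧
  (∀ n : ℤ, Module.Projective Aᵐᵒᵖ (T.X n) ∧ Module.Finite Aᵐᵒᵖ (T.X n)) ∧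
  (∀ n : ℤ, n ≠ 0 → ∀ f : (Kq A).obj T ⟶ ((Kq A).obj T)⟦n⟧, f = 0) ∧
  (∀ W : Set (HomotopyCategory (Mod A) (ComplexShape.up ℤ)),
    (Kq A).obj T ∈ W →
    (∀ X Y, X ∈ W → Nonempty (X ≅ Y) → Y ∈ W) →
    (∀ X, X ∈ W → ∀ n : ℤ, X⟦n⟧ ∈ W) →
    (∀ Tr : Triangle (HomotopyCategory (Mod A) (ComplexShape.up ℤ)),
      (Tr ∈ distTriang (HomotopyCategory (Mod A) (ComplexShape.up ℤ))) → Tr.obj₁ ∈ W → Tr.obj₂ ∈ W → Tr.obj₃ ∈ W) →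
    (∀ X Y : HomotopyCategory (Mod A) (ComplexShape.up ℤ),
      (∃ (i : X ⟶ Y) (r : Y ⟶ X), i ≫ r = 𝟙 X) → Y ∈ W → X ∈ W) →
    ∀ K : CochainComplex (Mod A) ℤ,
      (∃ b : ℕ, ∀ n : ℤ, (b : ℤ) < |n| → IsZero (K.X n)) →
      (∀ n : ℤ, Module.Projective Aᵐᵒᵖ (K.X n) ∧ Module.Finite Aᵐᵒᵖ (K.X n)) →
      (Kq A).obj K ∈ W)

instance : HasFiniteBiproducts (CochainComplex (Mod A) ℤ) :=
  HasFiniteBiproducts.of_hasFiniteProducts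

/-- Dreyfus-Schmidt's definition of a perverse equivalence `F : D^b(A) → D^b(B)` relative to
filtrations `𝒮`, `𝒯` (given as increasing chains of index sets for the fixed complete
families `SA`, `SB` of simple modules, exhausted at stage `n`), a perversity function `π`,
and with induced bijection `β` of simple modules. -/
def IsPerverseWith {A B : Type} [Ring A] [Ring B] (F : Db A ⥤ Db B)
    {ZA ZB : Type} (SA : SimplesFamily Aᵐᵒᵖ ZA) (SB : SimplesFamily Bᵐᵒᵖ ZB)
    (n : ℕ) (𝒮 : ℕ → Set ZA) (𝒯 : ℕ → Set ZB) (π : ℕ → ℤ) (β : ZA ≃ ZB) : Prop :=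
  Monotone 𝒮 ∧ Monotone 𝒯 ∧ 𝒮 n = Set.univ ∧ 𝒯 n = Set.univ ∧
  (∀ (i : ℕ) (z : ZA), z ∈ 𝒮 i ↔ β z ∈ 𝒯 i) ∧
  ∀ (i : ℕ) (z : ZA), i ≤ n → z ∈ 𝒮 i → z ∉ below 𝒮 i →
    (∀ m : ℤ, m ≠ -π i →
      AllCompFactorsIn Bᵐᵒᵖ
        ((homologyFunctor (Mod B) m).obj ((F.obj (DbSingle A (SA.S z) (SA.fin z) 0)).obj))
        (SB.S '' below 𝒯 i)) ∧
    ∃ (L₁ L₂ : Submodule Bᵐᵒᵖ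
        ((homologyFunctor (Mod B) (-π i)).obj ((F.obj (DbSingle A (SA.S z) (SA.fin z) 0)).obj))),
      L₁ ≤ L₂ ∧
      AllCompFactorsIn Bᵐᵒᵖ (↥L₁) (SB.S '' below 𝒯 i) ∧
      AllCompFactorsIn Bᵐᵒᵖ
        (((homologyFunctor (Mod B) (-π i)).obj
            ((F.obj (DbSingle A (SA.S z) (SA.fin z) 0)).obj)) ⧸ L₂)
        (SB.S '' below 𝒯 i) ∧
      Nonempty ((↥L₂ ⧸ L₁.comap L₂.subtype) ≃ₗ[Bᵐᵒᵖ] ((SB.S (β z) : Type)))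

/-- A perverse equivalence: perverse relative to the given filtrations and function for some
induced bijection of simple modules. -/
def IsPerverse {A B : Type} [Ring A] [Ring B] (F : Db A ⥤ Db B)
    {ZA ZB : Type} (SA : SimplesFamily Aᵐᵒᵖ ZA) (SB : SimplesFamily Bᵐᵒᵖ ZB)
    (n : ℕ) (𝒮 : ℕ → Set ZA) (𝒯 : ℕ → Set ZB) (π : ℕ → ℤ) : Prop :=
  ∃ β : ZA ≃ ZB, IsPerverseWith F SA SB n 𝒮 𝒯 π β

/-- The perversity function of (simply) alternating perverse equivalences:
`π(0) = 0`, `π(1) = 1`, `π(2) = 0`. -/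
def altπ : ℕ → ℤ := fun i => if i = 1 then 1 else 0



section ExtVanishAux

variable {R : Type} [Ring R]

lemma acf_apply {M W : Type} [AddCommGroup M] [Module R M] [AddCommGroup W] [Module R W]
    {𝒯 : Set (ModuleCat.{0} R)} (h : AllCompFactorsIn R M 𝒯) (N : Submodule R M)
    (φ : ↥N →ₗ[R] W) (hsurj : Function.Surjective φ) (hW : IsSimpleModule R W) :
    ∃ T ∈ 𝒯, Nonempty (W ≃ₗ[R] ↥T) := by
  haveI := hW
  have e := LinearMap.quotKerEquivOfSurjective φ hsurj
  have hsimple : IsSimpleModule R (↥N ⧸ LinearMap.ker φ) := IsSimpleModule.congr e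
  obtain ⟨T, hT, ⟨e'⟩⟩ := h N (LinearMap.ker φ) hsimple
  exact ⟨T, hT, ⟨e.symm.trans e'⟩⟩

lemma acf_of_injective {M M' : Type} [AddCommGroup M] [Module R M] [AddCommGroup M']
    [Module R M'] {𝒯 : Set (ModuleCat.{0} R)} (h : AllCompFactorsIn R M 𝒯) (f : M' →ₗ[R] M)
    (hf : Function.Injective f) : AllCompFactorsIn R M' 𝒯 := by
  intro N P hP
  have e := Submodule.equivMapOfInjective f hf N
  refine acf_apply h (Submodule.map f N) (P.mkQ ∘ₗ e.symm.toLinearMap) ?_ hP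
  exact (Submodule.mkQ_surjective P).comp e.symm.surjective

lemma acf_mono {M : Type} [AddCommGroup M] [Module R M]
    {𝒯 𝒯' : Set (ModuleCat.{0} R)} (hsub : 𝒯 ⊆ 𝒯') (h : AllCompFactorsIn R M 𝒯) :
    AllCompFactorsIn R M 𝒯' := by
  intro N P hP
  obtain ⟨T, hT, e⟩ := h N P hP
  exact ⟨T, hsub hT, e⟩

lemma acf_of_ext {M : Type} [AddCommGroup M] [Module R M] {𝒯 : Set (ModuleCat.{0} R)}
    (K : Submodule R M) (hK : AllCompFactorsIn R (↥K) 𝒯)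
    (hQ : AllCompFactorsIn R (M ⧸ K) 𝒯) : AllCompFactorsIn R M 𝒯 := by
  intro N P hP
  haveI := hP
  rcases eq_bot_or_eq_top (Submodule.map P.mkQ (Submodule.comap N.subtype K)) with hbot | htop
  · -- the simple quotient comes from `M ⧸ K`
    have hker : ∀ n : ↥N, (↑n : M) ∈ K → n ∈ P := by
      intro n hn
      have h1 : P.mkQ n ∈ Submodule.map P.mkQ (Submodule.comap N.subtype K) :=
        Submodule.mem_map_of_mem hn
      rw [hbot, Submodule.mem_bot] at h1
      simpa only [Submodule.mkQ_apply, Submodule.Quotient.mk_eq_zero] using h1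
    set ρ : ↥N →ₗ[R] ↥(Submodule.map K.mkQ N) :=
      K.mkQ.restrict (fun x hx => Submodule.mem_map_of_mem hx) with hρdef
    have hρs : Function.Surjective ρ := by
      rintro ⟨y, hy⟩
      obtain ⟨x, hxN, hxy⟩ := hy
      exact ⟨⟨x, hxN⟩, Subtype.ext hxy⟩
    have hρk : LinearMap.ker ρ ≤ P := by
      intro x hx
      apply hker
      have h2 : K.mkQ (x : M) = 0 := by
        have h3 := congrArg Subtype.val (LinearMap.mem_ker.mp hx)
        simpa [hρdef, LinearMap.restrict_apply] using h3
      simpa only [Submodule.mkQ_apply, Submodule.Quotient.mk_eq_zero] using h2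
    have hle : LinearMap.ker ρ ≤ LinearMap.ker P.mkQ := by rw [Submodule.ker_mkQ]; exact hρk
    have hψs : Function.Surjective ((LinearMap.ker ρ).liftQ P.mkQ hle) := by
      intro w
      obtain ⟨n, rfl⟩ := Submodule.mkQ_surjective P w
      exact ⟨(LinearMap.ker ρ).mkQ n, by rw [Submodule.mkQ_apply, Submodule.liftQ_apply]⟩
    have e := LinearMap.quotKerEquivOfSurjective ρ hρs
    exact acf_apply hQ (Submodule.map K.mkQ N)
      (((LinearMap.ker ρ).liftQ P.mkQ hle) ∘ₗ e.symm.toLinearMap)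
      (hψs.comp e.symm.surjective) hP
  · -- the simple quotient comes from `K`
    set ρ : ↥(Submodule.comap K.subtype N) →ₗ[R] ↥N :=
      K.subtype.restrict (fun x hx => hx) with hρdef
    have hs : Function.Surjective (P.mkQ ∘ₗ ρ) := by
      intro w
      have hw : w ∈ Submodule.map P.mkQ (Submodule.comap N.subtype K) := by
        rw [htop]; exact Submodule.mem_top
      obtain ⟨n, hnK, hnw⟩ := hw
      exact ⟨⟨⟨(n : M), hnK⟩, n.2⟩, hnw⟩
    exact acf_apply hK (Submodule.comap K.subtype N) (P.mkQ ∘ₗ ρ) hs hP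

lemma acf_of_simple {M : Type} [AddCommGroup M] [Module R M] {𝒯 : Set (ModuleCat.{0} R)}
    (hM : IsSimpleModule R M) {T : ModuleCat.{0} R} (hT : T ∈ 𝒯)
    (he : Nonempty (M ≃ₗ[R] ↥T)) : AllCompFactorsIn R M 𝒯 := by
  haveI := hM
  intro N P hP
  haveI := hP
  haveI hnt := IsSimpleModule.nontrivial R (↥N ⧸ P)
  rcases eq_bot_or_eq_top N with hN | hN
  · exfalso
    subst hN
    haveI hsub : Subsingleton ↥(⊥ : Submodule R M) :=
      ⟨fun a b => Subtype.ext (by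
        rw [(Submodule.mem_bot R).mp a.2, (Submodule.mem_bot R).mp b.2])⟩
    have hPtop : P = ⊤ := by
      ext x
      simp only [Submodule.mem_top, iff_true]
      rw [Subsingleton.elim x 0]; exact P.zero_mem
    exact not_subsingleton _ (Submodule.Quotient.subsingleton_iff.mpr hPtop)
  · subst hN
    haveI : IsSimpleModule R (↥(⊤ : Submodule R M)) := IsSimpleModule.congr Submodule.topEquiv
    rcases eq_bot_or_eq_top P with hP' | hP'
    · exact ⟨T, hT, ⟨(Submodule.quotEquivOfEqBot P hP').trans (Submodule.topEquiv.trans he.some)⟩⟩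
    · exact absurd (Submodule.Quotient.subsingleton_iff.mpr hP') (not_subsingleton _)

lemma isSemisimple_of_isSimple {M : Type} [AddCommGroup M] [Module R M]
    (h : IsSimpleModule R M) : IsSemisimpleModule R M := by
  haveI := h
  refine IsSemisimpleModule.of_sSup_simples_eq_top (eq_top_iff.mpr (le_sSup ?_))
  show IsSimpleModule R (↥(⊤ : Submodule R M))
  exact IsSimpleModule.congr Submodule.topEquiv

lemma socle_isSemisimple {M : Type} [AddCommGroup M] [Module R M] :
    IsSemisimpleModule R (↥(socle R M)) := by
  have h : socle R M = ⨆ N ∈ {N : Submodule R M | IsAtom N}, N := by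
    rw [socle, sSup_eq_iSup]
  rw [h]
  exact isSemisimpleModule_biSup_of_isSemisimpleModule_submodule
    (fun N hN => isSemisimple_of_isSimple (isSimpleModule_iff_isAtom.mpr hN))

lemma acf_socle {M : Type} [AddCommGroup M] [Module R M] {𝒯 : Set (ModuleCat.{0} R)}
    (h : ∀ T : Submodule R M, IsAtom T → ∃ S ∈ 𝒯, Nonempty ((↥T) ≃ₗ[R] ↥S)) :
    AllCompFactorsIn R (↥(socle R M)) 𝒯 := by
  haveI : IsSemisimpleModule R (↥(socle R M)) := socle_isSemisimple
  intro N P hP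
  haveI := hP
  obtain ⟨C, hC⟩ := exists_isCompl P
  have e : (↥N ⧸ P) ≃ₗ[R] ↥C := Submodule.quotientEquivOfIsCompl P C hC
  haveI hCs : IsSimpleModule R ↥C := IsSimpleModule.congr e.symm
  have hfinj : Function.Injective ((socle R M).subtype ∘ₗ N.subtype) :=
    (socle R M).injective_subtype.comp N.injective_subtype
  have e2 : (↥C) ≃ₗ[R] ↥(Submodule.map ((socle R M).subtype ∘ₗ N.subtype) C) :=
    Submodule.equivMapOfInjective ((socle R M).subtype ∘ₗ N.subtype) hfinj C
  haveI hTs : IsSimpleModule R (↥(Submodule.map ((socle R M).subtype ∘ₗ N.subtype) C)) :=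
    IsSimpleModule.congr (N := ↥C) e2.symm
  obtain ⟨S, hS, ⟨e3⟩⟩ := h _ (isSimpleModule_iff_isAtom.mp hTs)
  exact ⟨S, hS, ⟨(e.trans e2).trans e3⟩⟩

lemma atom_eq_of_socle_simple {M : Type} [AddCommGroup M] [Module R M]
    (hs : IsSimpleModule R (↥(socle R M))) {T : Submodule R M} (hT : IsAtom T) :
    T = socle R M := by
  haveI := hs
  have hle : T ≤ socle R M := le_sSup hT
  have hmap : Submodule.map (socle R M).subtype (Submodule.comap (socle R M).subtype T) = T := by
    rw [Submodule.map_comap_subtype]; exact inf_eq_right.mpr hle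
  rcases eq_bot_or_eq_top (Submodule.comap (socle R M).subtype T) with h | h
  · exact absurd (by rw [← hmap, h, Submodule.map_bot]) hT.1
  · rw [← hmap, h, Submodule.map_top, Submodule.range_subtype]

lemma coatom_quot {X : Type} [AddCommGroup X] [Module R X] {𝔪 N : Submodule R X}
    (huniq : ∀ C' : Submodule R X, IsCoatom C' → C' = 𝔪)
    {C : Submodule R (X ⧸ N)} (hC : IsCoatom C) :
    N ≤ 𝔪 ∧ C = Submodule.map N.mkQ 𝔪 := by
  haveI h1 : IsSimpleModule R ((X ⧸ N) ⧸ C) := isSimpleModule_iff_isCoatom.mpr hC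
  have hND : N ≤ Submodule.comap N.mkQ C := by
    intro x hx
    show N.mkQ x ∈ C
    have hx0 : N.mkQ x = 0 := by
      simpa only [Submodule.mkQ_apply, Submodule.Quotient.mk_eq_zero] using hx
    rw [hx0]; exact C.zero_mem
  have hmap : Submodule.map N.mkQ (Submodule.comap N.mkQ C) = C :=
    Submodule.map_comap_eq_of_surjective (Submodule.mkQ_surjective N) C
  haveI h2 : IsSimpleModule R ((X ⧸ N) ⧸ Submodule.map N.mkQ (Submodule.comap N.mkQ C)) := by
    rw [hmap]; exact h1
  have h3 : IsSimpleModule R (X ⧸ Submodule.comap N.mkQ C) :=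
    IsSimpleModule.congr (Submodule.quotientQuotientEquivQuotient N _ hND).symm
  have hD : Submodule.comap N.mkQ C = 𝔪 := huniq _ (isSimpleModule_iff_isCoatom.mp h3)
  exact ⟨hD ▸ hND, by rw [← hmap, hD]⟩

lemma radical_quot {X : Type} [AddCommGroup X] [Module R X] {𝔪 N : Submodule R X}
    (hco : IsCoatom 𝔪) (huniq : ∀ C' : Submodule R X, IsCoatom C' → C' = 𝔪)
    (hN : N ≤ 𝔪) : radical R (X ⧸ N) = Submodule.map N.mkQ 𝔪 := by
  have hmapco : IsCoatom (Submodule.map N.mkQ 𝔪) := by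
    rw [← isSimpleModule_iff_isCoatom]
    haveI : IsSimpleModule R (X ⧸ 𝔪) := isSimpleModule_iff_isCoatom.mpr hco
    exact IsSimpleModule.congr (Submodule.quotientQuotientEquivQuotient N 𝔪 hN)
  have hset : {C : Submodule R (X ⧸ N) | IsCoatom C} = {Submodule.map N.mkQ 𝔪} := by
    ext C
    constructor
    · intro hC; exact (coatom_quot huniq hC).2
    · intro hC
      rw [Set.mem_singleton_iff] at hC
      rw [hC]; exact hmapco
  rw [radical, hset, sInf_singleton]

end ExtVanishAux

/-- **Vanishing of `Ext¹` between the canonical quotients and the universal extensions.**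
With `S₀ ⊆ S₁` sets of simple right `A`-modules, `S_y` simple with class in `S₁ ∖ S₀`,
`S_x` simple with class not in `S₁`, `U_y` the largest submodule of the injective hull of
`S_y` with socle `S_y` and all other composition factors in `S₀`, and `U_x` the largest
quotient of the projective cover of `S_x` with top `S_x`, all other composition factors in
`S₁` and all composition factors of its socle in `S₁ ∖ S₀`, one has `Ext¹_A(U_x, U_y) = 0`;
equivalently every short exact sequence `0 → U_y → E → U_x → 0` splits. -/
theorem statement_4 (k : Type) [Field k]
    (A : Type) [Ring A] [Algebra k A] [FiniteDimensional k A]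
    (S₀ S₁ : Set (Mod A)) (hsub : S₀ ⊆ S₁)
    (hS₁ : ∀ T ∈ S₁, IsSimpleModule Aᵐᵒᵖ (T : Type))
    (Sx Sy : Mod A) (hSx : IsSimpleModule Aᵐᵒᵖ Sx) (hSy : IsSimpleModule Aᵐᵒᵖ Sy)
    (hy1 : ∃ T ∈ S₁, Nonempty ((Sy : Type) ≃ₗ[Aᵐᵒᵖ] (T : Type)))
    (hy0 : ¬∃ T ∈ S₀, Nonempty ((Sy : Type) ≃ₗ[Aᵐᵒᵖ] (T : Type)))
    (hx1 : ¬∃ T ∈ S₁, Nonempty ((Sx : Type) ≃ₗ[Aᵐᵒᵖ] (T : Type)))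
    -- U_y : the universal extension inside the injective hull of S_y
    (Iy : Mod A) (iy : (Sy : Type) →ₗ[Aᵐᵒᵖ] (Iy : Type))
    (hIy : IsInjectiveHull Aᵐᵒᵖ Iy Sy iy)
    (Uy : Submodule Aᵐᵒᵖ Iy)
    (hUy : Nonempty ((↥(socle Aᵐᵒᵖ ↥Uy)) ≃ₗ[Aᵐᵒᵖ] (Sy : Type)) ∧
      AllCompFactorsIn Aᵐᵒᵖ (↥Uy ⧸ socle Aᵐᵒᵖ ↥Uy) S₀)
    (hUymax : ∀ U : Submodule Aᵐᵒᵖ Iy,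
      (Nonempty ((↥(socle Aᵐᵒᵖ ↥U)) ≃ₗ[Aᵐᵒᵖ] (Sy : Type)) ∧
        AllCompFactorsIn Aᵐᵒᵖ (↥U ⧸ socle Aᵐᵒᵖ ↥U) S₀) → U ≤ Uy)
    -- U_x : the largest quotient of the projective cover of S_x
    (Px : Mod A) (px : (Px : Type) →ₗ[Aᵐᵒᵖ] (Sx : Type))
    (hPx : IsProjectiveCover Aᵐᵒᵖ Px Sx px)
    (Nx : Submodule Aᵐᵒᵖ Px)
    (hNx : Nonempty ((headOf Aᵐᵒᵖ ((Px : Type) ⧸ Nx)) ≃ₗ[Aᵐᵒᵖ] (Sx : Type)) ∧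
      AllCompFactorsIn Aᵐᵒᵖ (↥(radical Aᵐᵒᵖ ((Px : Type) ⧸ Nx))) S₁ ∧
      AllCompFactorsIn Aᵐᵒᵖ (↥(socle Aᵐᵒᵖ ((Px : Type) ⧸ Nx))) (S₁ \ S₀))
    (hNxmin : ∀ N : Submodule Aᵐᵒᵖ Px,
      (Nonempty ((headOf Aᵐᵒᵖ ((Px : Type) ⧸ N)) ≃ₗ[Aᵐᵒᵖ] (Sx : Type)) ∧
        AllCompFactorsIn Aᵐᵒᵖ (↥(radical Aᵐᵒᵖ ((Px : Type) ⧸ N))) S₁ ∧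
        AllCompFactorsIn Aᵐᵒᵖ (↥(socle Aᵐᵒᵖ ((Px : Type) ⧸ N))) (S₁ \ S₀)) → Nx ≤ N) :
    -- Ext¹(U_x, U_y) = 0 : every extension of U_x by U_y splits
    ∀ (E : Type) (_ : AddCommGroup E) (_ : Module Aᵐᵒᵖ E)
      (i : ↥Uy →ₗ[Aᵐᵒᵖ] E) (p : E →ₗ[Aᵐᵒᵖ] ((Px : Type) ⧸ Nx)),
      Function.Injective i → Function.Surjective p → LinearMap.range i = LinearMap.ker p →
      ∃ s : ((Px : Type) ⧸ Nx) →ₗ[Aᵐᵒᵖ] E, p ∘ₗ s = LinearMap.id := by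
  intro E instE instME i p hi hp hexact
  haveI := hSx
  haveI := hSy
  obtain ⟨hPproj, hpxsurj, hpxess⟩ := hPx
  haveI := hPproj
  -- `Px` is a local module with unique maximal submodule `ker px`
  set 𝔪 := LinearMap.ker px with h𝔪
  have h𝔪co : IsCoatom 𝔪 := by
    rw [h𝔪, ← isSimpleModule_iff_isCoatom]
    exact IsSimpleModule.congr (LinearMap.quotKerEquivOfSurjective px hpxsurj)
  have huniq : ∀ C : Submodule Aᵐᵒᵖ Px, IsCoatom C → C = 𝔪 := by
    intro C hC
    rcases eq_bot_or_eq_top (Submodule.map px C) with h | h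
    · have hle : C ≤ 𝔪 := by
        intro x hx
        have hmem : px x ∈ Submodule.map px C := Submodule.mem_map_of_mem hx
        rw [h, Submodule.mem_bot] at hmem
        exact LinearMap.mem_ker.mpr hmem
      by_contra hne
      exact h𝔪co.1 (hC.2 _ (lt_of_le_of_ne hle hne))
    · exact absurd (hpxess C h) hC.1
  have hNx𝔪 : Nx ≤ 𝔪 := by
    have hne : {C : Submodule Aᵐᵒᵖ ((Px : Type) ⧸ Nx) | IsCoatom C}.Nonempty := by
      by_contra hemp
      have hrad : radical Aᵐᵒᵖ ((Px : Type) ⧸ Nx) = ⊤ := by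
        rw [radical, Set.not_nonempty_iff_eq_empty.mp hemp, sInf_empty]
      obtain ⟨e⟩ := hNx.1
      haveI := IsSimpleModule.nontrivial Aᵐᵒᵖ (↥Sx)
      haveI : Nontrivial (headOf Aᵐᵒᵖ ((Px : Type) ⧸ Nx)) := e.toEquiv.nontrivial
      exact not_subsingleton _ (Submodule.Quotient.subsingleton_iff.mpr hrad)
    obtain ⟨C, hC⟩ := hne
    exact (coatom_quot huniq hC).1
  have hradNx : radical Aᵐᵒᵖ ((Px : Type) ⧸ Nx) = Submodule.map Nx.mkQ 𝔪 :=
    radical_quot h𝔪co huniq hNx𝔪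
  -- lift the projection `p` through the projective module `Px`
  obtain ⟨g, hg⟩ := Module.projective_lifting_property p Nx.mkQ hp
  have hNNx : LinearMap.ker g ≤ Nx := by
    intro x hx
    have h1 : Nx.mkQ x = 0 := by
      rw [← hg]
      simp [LinearMap.mem_ker.mp hx]
    simpa only [Submodule.mkQ_apply, Submodule.Quotient.mk_eq_zero] using h1
  set N := LinearMap.ker g with hNdef
  have hNker : N ≤ LinearMap.ker Nx.mkQ := by rw [Submodule.ker_mkQ]; exact hNNx
  set q : ((Px : Type) ⧸ N) →ₗ[Aᵐᵒᵖ] ((Px : Type) ⧸ Nx) := N.liftQ Nx.mkQ hNker with hqdef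
  have hq : q ∘ₗ N.mkQ = Nx.mkQ := Submodule.liftQ_mkQ _ _ _
  set gbar : ((Px : Type) ⧸ N) →ₗ[Aᵐᵒᵖ] E := N.liftQ g le_rfl with hgbardef
  have hgb : gbar ∘ₗ N.mkQ = g := Submodule.liftQ_mkQ _ _ _
  have hgbinj : Function.Injective gbar := by
    rw [← LinearMap.ker_eq_bot]
    exact Submodule.ker_liftQ_eq_bot _ _ _ le_rfl
  have hpgb : p ∘ₗ gbar = q := by
    apply Submodule.linearMap_qext
    rw [LinearMap.comp_assoc, hgb, hg, hq]
  set Y := LinearMap.ker q with hYdef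
  have hY : Y = Submodule.map N.mkQ Nx := by
    rw [hYdef, hqdef, Submodule.ker_liftQ, Submodule.ker_mkQ]
  -- embed `Y` into `Uy`
  have hmemY : ∀ y : ↥Y, gbar (y : (Px : Type) ⧸ N) ∈ LinearMap.range i := by
    intro y
    rw [hexact, LinearMap.mem_ker]
    have h2 : q (y : (Px : Type) ⧸ N) = 0 := y.2
    calc p (gbar (y : (Px : Type) ⧸ N)) = q (y : (Px : Type) ⧸ N) :=
          LinearMap.congr_fun hpgb _
      _ = 0 := h2
  set ei := LinearEquiv.ofInjective i hi with heidef
  set j : ↥Y →ₗ[Aᵐᵒᵖ] ↥Uy :=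
    ei.symm.toLinearMap ∘ₗ
      LinearMap.codRestrict (LinearMap.range i) (gbar ∘ₗ Y.subtype) hmemY with hjdef
  have hjinj : Function.Injective j := by
    apply ei.symm.injective.comp
    intro a b hab
    apply Subtype.ext
    apply hgbinj
    exact congrArg Subtype.val hab
  -- composition factors of `Uy` all lie in `S₁`
  obtain ⟨T₁, hT₁, ⟨eyT⟩⟩ := hy1
  have hT₁' : T₁ ∈ S₁ \ S₀ := ⟨hT₁, fun h0 => hy0 ⟨T₁, h0, ⟨eyT⟩⟩⟩
  obtain ⟨esoc⟩ := hUy.1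
  haveI hsocUy : IsSimpleModule Aᵐᵒᵖ (↥(socle Aᵐᵒᵖ ↥Uy)) := IsSimpleModule.congr esoc
  have hACFUy : AllCompFactorsIn Aᵐᵒᵖ (↥Uy) S₁ :=
    acf_of_ext (socle Aᵐᵒᵖ ↥Uy)
      (acf_of_simple hsocUy hT₁ ⟨esoc.trans eyT⟩)
      (acf_mono hsub hUy.2)
  have hN𝔪 : N ≤ 𝔪 := hNNx.trans hNx𝔪
  have hradN : radical Aᵐᵒᵖ ((Px : Type) ⧸ N) = Submodule.map N.mkQ 𝔪 :=
    radical_quot h𝔪co huniq hN𝔪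
  -- the key step : `Px ⧸ ker g` satisfies the defining properties of `Ux`
  have hkey : Nx ≤ N := by
    apply hNxmin
    refine ⟨?_, ?_, ?_⟩
    · -- the head is `Sx`
      obtain ⟨eSx⟩ := hNx.1
      exact ⟨(Submodule.quotEquivOfEq _ _ hradN).trans
        ((Submodule.quotientQuotientEquivQuotient N 𝔪 hN𝔪).trans
          (((Submodule.quotientQuotientEquivQuotient Nx 𝔪 hNx𝔪).symm.trans
            ((Submodule.quotEquivOfEq _ _ hradNx.symm).trans eSx))))⟩
    · -- composition factors of the radical lie in `S₁`
      rw [hradN]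
      have hYRm : Y ≤ Submodule.map N.mkQ 𝔪 := by
        rw [hY]; exact Submodule.map_mono hNx𝔪
      refine acf_of_ext (Submodule.comap (Submodule.map N.mkQ 𝔪).subtype Y) ?_ ?_
      · refine acf_of_injective hACFUy
          (j ∘ₗ LinearMap.codRestrict Y
            ((Submodule.map N.mkQ 𝔪).subtype ∘ₗ
              (Submodule.comap (Submodule.map N.mkQ 𝔪).subtype Y).subtype)
            (fun c => c.2)) ?_
        intro a b hab
        simp only [LinearMap.comp_apply] at hab
        have h2 := hjinj hab
        simp only [Subtype.ext_iff, LinearMap.codRestrict_apply, LinearMap.coe_comp,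
          Function.comp_apply, Submodule.coe_subtype] at h2
        exact Subtype.ext (Subtype.ext h2)
      · have hmapq : Submodule.map q (Submodule.map N.mkQ 𝔪)
            = radical Aᵐᵒᵖ ((Px : Type) ⧸ Nx) := by
          rw [← Submodule.map_comp, hq, hradNx]
        have hmem2 : ∀ x : ↥(Submodule.map N.mkQ 𝔪),
            q (x : (Px : Type) ⧸ N) ∈ radical Aᵐᵒᵖ ((Px : Type) ⧸ Nx) := by
          intro x
          rw [← hmapq]
          exact Submodule.mem_map_of_mem x.2
        set q' := LinearMap.codRestrict (radical Aᵐᵒᵖ ((Px : Type) ⧸ Nx))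
          (q ∘ₗ (Submodule.map N.mkQ 𝔪).subtype) hmem2 with hq'def
        have hq's : Function.Surjective q' := by
          rintro ⟨z, hz⟩
          rw [← hmapq] at hz
          obtain ⟨x, hxRm, hxq⟩ := hz
          exact ⟨⟨x, hxRm⟩, Subtype.ext hxq⟩
        have hq'k : LinearMap.ker q'
            = Submodule.comap (Submodule.map N.mkQ 𝔪).subtype Y := by
          rw [hq'def]
          exact (LinearMap.ker_codRestrict _ _ _).trans (LinearMap.ker_comp _ _)
        have e := LinearMap.quotKerEquivOfSurjective q' hq's
        rw [hq'k] at e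
        exact acf_of_injective hNx.2.1 e.toLinearMap e.injective
    · -- composition factors of the socle lie in `S₁ \ S₀`
      apply acf_socle
      intro T hT
      haveI hTs : IsSimpleModule Aᵐᵒᵖ ↥T := isSimpleModule_iff_isAtom.mpr hT
      by_cases hTY : T ≤ Y
      · -- `T` lies in `Y`, hence is isomorphic to the socle of `Uy`
        have hmapT : Submodule.map Y.subtype (Submodule.comap Y.subtype T) = T := by
          rw [Submodule.map_comap_subtype]; exact inf_eq_right.mpr hTY
        have e1 : ↥(Submodule.comap Y.subtype T) ≃ₗ[Aᵐᵒᵖ] ↥T :=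
          (Submodule.equivMapOfInjective Y.subtype Y.injective_subtype _).trans
            (LinearEquiv.ofEq _ _ hmapT)
        have e2 := Submodule.equivMapOfInjective j hjinj (Submodule.comap Y.subtype T)
        haveI h3 : IsSimpleModule Aᵐᵒᵖ (↥(Submodule.map j (Submodule.comap Y.subtype T))) :=
          IsSimpleModule.congr (e2.symm.trans e1)
        have h4 : Submodule.map j (Submodule.comap Y.subtype T) = socle Aᵐᵒᵖ ↥Uy :=
          atom_eq_of_socle_simple hsocUy (isSimpleModule_iff_isAtom.mp h3)
        exact ⟨T₁, hT₁', ⟨e1.symm.trans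
          (e2.trans (((LinearEquiv.ofEq _ _ h4).trans esoc).trans eyT))⟩⟩
      · -- `T` maps isomorphically into the socle of `Ux`
        have hTYbot : T ⊓ Y = ⊥ :=
          hT.2 _ (lt_of_le_of_ne inf_le_left (fun hh => hTY (inf_eq_left.mp hh)))
        have hφinj : Function.Injective (q ∘ₗ T.subtype) := by
          rw [← LinearMap.ker_eq_bot, LinearMap.ker_comp, ← hYdef]
          refine eq_bot_iff.mpr (fun x hx => ?_)
          have hmem3 : (x : (Px : Type) ⧸ N) ∈ T ⊓ Y := ⟨x.2, hx⟩
          rw [hTYbot, Submodule.mem_bot] at hmem3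
          exact (Submodule.mem_bot _).mpr (Subtype.ext hmem3)
        have e4 := LinearEquiv.ofInjective (q ∘ₗ T.subtype) hφinj
        haveI h5 : IsSimpleModule Aᵐᵒᵖ (↥(LinearMap.range (q ∘ₗ T.subtype))) :=
          IsSimpleModule.congr e4.symm
        have h6 : LinearMap.range (q ∘ₗ T.subtype) ≤ socle Aᵐᵒᵖ ((Px : Type) ⧸ Nx) :=
          le_sSup (isSimpleModule_iff_isAtom.mp h5)
        have hmapT5 : Submodule.map (socle Aᵐᵒᵖ ((Px : Type) ⧸ Nx)).subtype
            (Submodule.comap (socle Aᵐᵒᵖ ((Px : Type) ⧸ Nx)).subtype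
              (LinearMap.range (q ∘ₗ T.subtype)))
            = LinearMap.range (q ∘ₗ T.subtype) := by
          rw [Submodule.map_comap_subtype]; exact inf_eq_right.mpr h6
        have e5 : ↥(Submodule.comap (socle Aᵐᵒᵖ ((Px : Type) ⧸ Nx)).subtype
              (LinearMap.range (q ∘ₗ T.subtype)))
            ≃ₗ[Aᵐᵒᵖ] ↥(LinearMap.range (q ∘ₗ T.subtype)) :=
          (Submodule.equivMapOfInjective _ (Submodule.injective_subtype _) _).trans
            (LinearEquiv.ofEq _ _ hmapT5)
        refine acf_apply hNx.2.2 _ (e4.symm.toLinearMap ∘ₗ e5.toLinearMap) ?_ hTs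
        exact e4.symm.surjective.comp e5.surjective
  -- conclude : the splitting
  refine ⟨Nx.liftQ g hkey, ?_⟩
  apply Submodule.linearMap_qext
  rw [LinearMap.comp_assoc, Submodule.liftQ_mkQ, hg, LinearMap.id_comp]


end PervSL2
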